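/- Let Δ be a subset of H = {0,…,N_1-1} × ⋯ × {0,…,N_m-1} with each N_i dividing q-1, and let E_Δ ⊆ F_q^n (n = N_1⋯N_m) be the linear code spanned by the evaluations of monomials X^α with α ∈ Δ at all points of ⟨ξ_1⟩ × ⋯ × ⟨ξ_m⟩. Define Δ^⊥ = H \ { -α : α ∈ Δ } (negation taken componentwise modulo N_i). Then dim E_Δ = |Δ| and the Euclidean dual code of E_Δ equals E_{Δ^⊥}. -/

import Mathlib

open Finset

section aux

variable {F : Type*} [Field F]

lemma geomSumRoot [DecidableEq F] {ζ : F} {n : ℕ} (h1 : ζ ^ n = 1) :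
    ∑ k ∈ Finset.range n, ζ ^ k = if ζ = 1 then (n : F) else 0 := by
  split_ifs with h
  · simp [h]
  · rw [geom_sum_eq h, h1, sub_self, zero_div]

lemma zmodSum {n : ℕ} [NeZero n] (f : ℕ → F) :
    ∑ x : ZMod n, f x.val = ∑ k ∈ Finset.range n, f k := by
  apply Finset.sum_nbij' (fun x : ZMod n => x.val) (fun k : ℕ => (k : ZMod n))
  · intro x _; exact Finset.mem_range.2 (ZMod.val_lt x)
  · intro k _; exact Finset.mem_univ _
  · intro x _; exact ZMod.natCast_rightInverse x
  · intro k hk; exact ZMod.val_cast_of_lt (Finset.mem_range.1 hk)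
  · intro x _; rfl

variable {m : ℕ} (N : Fin m → ℕ) [∀ i, NeZero (N i)] (ξ : Fin m → F)

/-- The evaluation vector of the monomial `X^α`. -/
def evalVec (α : ∀ i, ZMod (N i)) : (∀ i, ZMod (N i)) → F :=
  fun j => ∏ i, ξ i ^ ((j i).val * (α i).val)

lemma orth (hξ : ∀ i, orderOf (ξ i) = N i) (α β : ∀ i, ZMod (N i)) :
    ∑ j, evalVec N ξ α j * evalVec N ξ β j
      = if β = -α then (∏ i, (N i : F)) else 0 := by
  classical
  have hstep : ∀ j : ∀ i, ZMod (N i), evalVec N ξ α j * evalVec N ξ β j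
      = ∏ i, (ξ i ^ ((α i).val + (β i).val)) ^ (j i).val := by
    intro j
    rw [evalVec, evalVec, ← Finset.prod_mul_distrib]
    refine Finset.prod_congr rfl fun i _ => ?_
    rw [← pow_add, ← pow_mul]
    exact congrArg (fun t => ξ i ^ t) (by ring)
  rw [Finset.sum_congr rfl fun j _ => hstep j]
  rw [← Fintype.prod_sum (fun i (x : ZMod (N i)) => (ξ i ^ ((α i).val + (β i).val)) ^ x.val)]
  have hfac : ∀ i, ∑ x : ZMod (N i), (ξ i ^ ((α i).val + (β i).val)) ^ x.val
      = if β i = -(α i) then ((N i : F)) else 0 := by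
    intro i
    rw [zmodSum (fun k => (ξ i ^ ((α i).val + (β i).val)) ^ k)]
    have hord : ξ i ^ N i = 1 := by
      conv_lhs => rw [← hξ i]
      exact pow_orderOf_eq_one _
    have key : ∀ t : ℕ, (ξ i ^ t = 1 ↔ (t : ZMod (N i)) = 0) := by
      intro t
      rw [← orderOf_dvd_iff_pow_eq_one, hξ i]
      exact (ZMod.natCast_eq_zero_iff t (N i)).symm
    rw [geomSumRoot (ζ := ξ i ^ ((α i).val + (β i).val)) (n := N i)
      (by rw [← pow_mul, mul_comm, pow_mul, hord, one_pow])]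
    congr 1
    rw [eq_iff_iff, key, Nat.cast_add, ZMod.natCast_rightInverse, ZMod.natCast_rightInverse,
      eq_neg_iff_add_eq_zero, add_comm]
  rw [Finset.prod_congr rfl fun i _ => hfac i]
  by_cases h : β = -α
  · subst h; simp
  · rw [if_neg h]
    have : ∃ i, β i ≠ -(α i) := by
      by_contra hc; push_neg at hc; exact h (funext hc)
    obtain ⟨i, hi⟩ := this
    exact Finset.prod_eq_zero (Finset.mem_univ i) (if_neg hi)

end aux

section aux2

variable {F : Type*} [Field F] [Fintype F] {m : ℕ} (N : Fin m → ℕ) [∀ i, NeZero (N i)]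
  (ξ : Fin m → F)

lemma prodN_ne (hdvd : ∀ i, N i ∣ Fintype.card F - 1) : (∏ i, (N i : F)) ≠ 0 := by
  rw [Finset.prod_ne_zero_iff]
  intro i _ h0
  set p := ringChar F with hp
  haveI : CharP F p := ringChar.charP F
  have hpN : p ∣ N i := (CharP.cast_eq_zero_iff F p (N i)).1 h0
  have hq : p ∣ Fintype.card F := (CharP.cast_eq_zero_iff F p (Fintype.card F)).1
    (FiniteField.cast_card_eq_zero F)
  have hq1 : p ∣ Fintype.card F - 1 := hpN.trans (hdvd i)
  have h1 : p ∣ 1 := by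
    have := Nat.dvd_sub hq hq1
    rwa [Nat.sub_sub_self Fintype.card_pos] at this
  have hprime : p.Prime := CharP.char_is_prime F p
  exact Nat.Prime.one_lt hprime |>.ne' (Nat.dvd_one.1 h1)

lemma evalVec_li (hdvd : ∀ i, N i ∣ Fintype.card F - 1) (hξ : ∀ i, orderOf (ξ i) = N i) :
    LinearIndependent F (evalVec N ξ) := by
  classical
  rw [linearIndependent_iff']
  intro s g h i hi
  have h2 : ∑ j, (∑ α ∈ s, g α • evalVec N ξ α) j * evalVec N ξ (-i) j = 0 := by
    rw [h]; simp
  have h3 : ∑ j, (∑ α ∈ s, g α • evalVec N ξ α) j * evalVec N ξ (-i) j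
      = ∑ α ∈ s, g α * ∑ j, evalVec N ξ α j * evalVec N ξ (-i) j := by
    simp only [Finset.sum_apply, smul_eq_mul, Finset.sum_mul, Finset.mul_sum]
    rw [Finset.sum_comm]
    exact Finset.sum_congr rfl fun α _ => Finset.sum_congr rfl fun j _ => by
      simp [smul_eq_mul]; ring
  rw [h3] at h2
  have h4 : ∑ α ∈ s, g α * ∑ j, evalVec N ξ α j * evalVec N ξ (-i) j
      = g i * ∏ k, (N k : F) := by
    rw [Finset.sum_congr rfl fun α _ => by rw [orth N ξ hξ α (-i)]]
    have : ∀ α ∈ s, (g α * if -i = -α then ∏ k, (N k : F) else 0)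
        = if α = i then g α * ∏ k, (N k : F) else 0 := by
      intro α _
      by_cases hh : α = i
      · subst hh; simp
      · rw [if_neg hh, if_neg (fun hc => hh (neg_injective hc).symm), mul_zero]
    rw [Finset.sum_congr rfl this, Finset.sum_ite_eq' s i, if_pos hi]
  rw [h4] at h2
  exact (mul_eq_zero.1 h2).resolve_right (prodN_ne N hdvd)

/-- The pairing `B c v = ∑ j, c j * v j` as a bilinear map. -/
noncomputable def pairB : ((∀ i, ZMod (N i)) → F) →ₗ[F] ((∀ i, ZMod (N i)) → F) →ₗ[F] F :=
  LinearMap.mk₂ F (fun c v => ∑ j, c j * v j)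
    (fun c c' v => by simp [add_mul, Finset.sum_add_distrib])
    (fun a c v => by simp [Finset.mul_sum, mul_assoc])
    (fun c v v' => by simp [mul_add, Finset.sum_add_distrib])
    (fun a c v => by simp [Finset.mul_sum]; exact Finset.sum_congr rfl fun j _ => by ring)

end aux2

theorem stmt2 {F : Type*} [Field F] [Fintype F] {m : ℕ} (N : Fin m → ℕ)
    [∀ i, NeZero (N i)] (hdvd : ∀ i, N i ∣ Fintype.card F - 1)
    (ξ : Fin m → F) (hξ : ∀ i, orderOf (ξ i) = N i)
    (Δ : Set (∀ i, ZMod (N i))) (hΔ : Δ.Nonempty) :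
    Module.finrank F (Submodule.span F
        ((fun α : ∀ i, ZMod (N i) => fun j : ∀ i, ZMod (N i) =>
          ∏ i, ξ i ^ ((j i).val * (α i).val)) '' Δ)) = Nat.card Δ ∧
    ∀ v : (∀ i, ZMod (N i)) → F,
      (∀ c ∈ Submodule.span F
          ((fun α : ∀ i, ZMod (N i) => fun j : ∀ i, ZMod (N i) =>
            ∏ i, ξ i ^ ((j i).val * (α i).val)) '' Δ), ∑ j, c j * v j = 0) ↔
      v ∈ Submodule.span F
          ((fun α : ∀ i, ZMod (N i) => fun j : ∀ i, ZMod (N i) =>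
            ∏ i, ξ i ^ ((j i).val * (α i).val)) '' {β | -β ∉ Δ}) := by
  classical
  have hfun : (fun α : ∀ i, ZMod (N i) => fun j : ∀ i, ZMod (N i) =>
      ∏ i, ξ i ^ ((j i).val * (α i).val)) = evalVec N ξ := rfl
  rw [hfun]
  set e := evalVec N ξ with he
  have li := evalVec_li N ξ hdvd hξ
  have cardeq : Fintype.card (∀ i, ZMod (N i))
      = Module.finrank F ((∀ i, ZMod (N i)) → F) := by
    rw [Module.finrank_pi]
  let b := basisOfLinearIndependentOfCardEqFinrank li cardeq
  have hb : ⇑b = e := coe_basisOfLinearIndependentOfCardEqFinrank li cardeq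
  constructor
  · haveI : Fintype ↥Δ := Fintype.ofFinite _
    have li2 : LinearIndependent F (fun x : Δ => e ↑x) :=
      li.comp (Subtype.val) Subtype.val_injective
    rw [Set.image_eq_range, finrank_span_eq_card li2, Nat.card_eq_fintype_card]
  · intro v
    have hBv : ∀ α, (∑ j, e α j * v j) = b.repr v (-α) * ∏ k, (N k : F) := by
      intro α
      calc ∑ j, e α j * v j = pairB N (e α) v := rfl
        _ = pairB N (e α) (∑ β, b.repr v β • b β) := by rw [Module.Basis.sum_repr]
        _ = ∑ β, b.repr v β * pairB N (e α) (e β) := by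
              rw [map_sum]
              exact Finset.sum_congr rfl fun β _ => by rw [map_smul, hb, smul_eq_mul]
        _ = ∑ β, b.repr v β * (if β = -α then ∏ k, (N k : F) else 0) := by
              refine Finset.sum_congr rfl fun β _ => ?_
              rw [show pairB N (e α) (e β) = ∑ j, e α j * e β j from rfl, orth N ξ hξ]
        _ = b.repr v (-α) * ∏ k, (N k : F) := by
              simp only [mul_ite, mul_zero]
              rw [Finset.sum_ite_eq' Finset.univ (-α), if_pos (Finset.mem_univ _)]
    constructor
    · intro hv
      rw [← hb]
      refine (Module.Basis.mem_span_image b).2 ?_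
      intro β hβ
      simp only [Set.mem_setOf_eq]
      intro hmem
      have h0 := hv (e (-β)) (Submodule.subset_span ⟨-β, hmem, rfl⟩)
      rw [hBv (-β), neg_neg] at h0
      have hz := (mul_eq_zero.1 h0).resolve_right (prodN_ne N hdvd)
      exact (Finsupp.mem_support_iff.1 hβ) hz
    · intro hv c hc
      have hsupp : ↑(b.repr v).support ⊆ {β | -β ∉ Δ} := by
        refine (Module.Basis.mem_span_image b).1 ?_
        rw [hb]; exact hv
      have hker : Submodule.span F (e '' Δ) ≤ LinearMap.ker ((pairB N).flip v) := by
        rw [Submodule.span_le]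
        rintro _ ⟨α, hα, rfl⟩
        simp only [SetLike.mem_coe, LinearMap.mem_ker, LinearMap.flip_apply]
        show pairB N (e α) v = 0
        rw [show pairB N (e α) v = ∑ j, e α j * v j from rfl, hBv α]
        have hz : b.repr v (-α) = 0 := by
          by_contra h0
          have hmem : (-α) ∈ (b.repr v).support := Finsupp.mem_support_iff.2 h0
          exact (hsupp hmem) (by simpa using hα)
        rw [hz, zero_mul]
      exact hker hc
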